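/- Let η: N → ℝ≥0 be defined by η_λ = ⟨λ, L^{λ>0}⟩ where L = [X^∨] - [𝔤^∨] as a virtual T-representation and L^{λ>0} is its projection to the weights pairing positively with λ. If X is quasi-symmetric, then η_λ = η_{-λ} for every cocharacter λ, and η_{wλ} = η_λ for every w in the Weyl group W. -/

import Mathlib

open scoped Classical

open Finset

private lemma stmt9_split {n : ℕ} (f : Fin n → ℝ) :
    (∑ i ∈ univ.filter (fun i => 0 < f i), f i) +
      (∑ i ∈ univ.filter (fun i => f i < 0), f i) = ∑ i, f i := by
  have h1 := Finset.sum_filter_add_sum_filter_not (univ : Finset (Fin n)) (fun i => 0 < f i) f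
  have h2 : (∑ i ∈ univ.filter (fun i => f i < 0), f i)
      = ∑ i ∈ univ.filter (fun i => ¬ 0 < f i), f i := by
    apply Finset.sum_subset
    · intro i hi
      simp only [mem_filter, mem_univ, true_and] at hi ⊢
      linarith
    · intro i hi hni
      simp only [mem_filter, mem_univ, true_and] at hi hni
      linarith
  linarith

private lemma stmt9_sum_zero {V : Type*} [AddCommGroup V] [Module ℝ V] {d : ℕ}
    (β : Fin d → V)
    (hqs : ∀ v : V,
      ∑ i ∈ univ.filter (fun i => β i ∈ Submodule.span ℝ ({v} : Set V)), β i = 0) :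
    ∑ i, β i = 0 := by
  classical
  have hmaps : ∀ i ∈ (univ : Finset (Fin d)),
      Submodule.span ℝ ({β i} : Set V) ∈
        (univ.image (fun i => Submodule.span ℝ ({β i} : Set V))) := by
    intro i _; exact Finset.mem_image_of_mem _ (mem_univ i)
  rw [← Finset.sum_fiberwise_of_maps_to hmaps β]
  apply Finset.sum_eq_zero
  intro s hs
  obtain ⟨i₀, _, hi₀⟩ := Finset.mem_image.mp hs
  have key : (∑ i ∈ univ.filter (fun i => Submodule.span ℝ ({β i} : Set V) = s), β i)
      = ∑ i ∈ univ.filter (fun i => β i ∈ s), β i := by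
    apply Finset.sum_subset
    · intro i hi
      simp only [mem_filter, mem_univ, true_and] at hi ⊢
      rw [← hi]
      exact Submodule.mem_span_singleton_self _
    · intro i hi hni
      simp only [mem_filter, mem_univ, true_and] at hi hni
      by_contra hne
      apply hni
      rw [← hi₀] at hi
      obtain ⟨c, hc⟩ := Submodule.mem_span_singleton.mp hi
      have hc0 : c ≠ 0 := by
        rintro rfl; simp at hc; exact hne hc.symm
      rw [← hc, ← hi₀]
      exact Submodule.span_singleton_smul_eq (IsUnit.mk0 c hc0) _
  rw [key, ← hi₀, hqs (β i₀)]

/-- With `η_λ = ⟨λ, L^{λ>0}⟩` for `L = [X^∨] - [𝔤^∨]` (weights `-βᵢ` from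
`X^∨` and `-αⱼ` from `𝔤^∨`), if `X` is quasi-symmetric then `η_λ = η_{-λ}` for every
cocharacter `λ`, and `η_{wλ} = η_λ` for every Weyl group element `w`. -/
theorem stmt9 {V : Type*} [AddCommGroup V] [Module ℝ V]
    {W : Type*} [Group W] (φ : W →* (V ≃ₗ[ℝ] V))
    {d m : ℕ} (β : Fin d → V) (α : Fin m → V)
    (hqs : ∀ v : V,
      ∑ i ∈ Finset.univ.filter (fun i => β i ∈ Submodule.span ℝ ({v} : Set V)), β i = 0)
    (hβW : ∀ w : W, ∃ σ : Equiv.Perm (Fin d), ∀ i, β (σ i) = φ w (β i))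
    (hαW : ∀ w : W, ∃ σ : Equiv.Perm (Fin m), ∀ j, α (σ j) = φ w (α j))
    (hαneg : ∃ τ : Equiv.Perm (Fin m), ∀ j, α (τ j) = -(α j))
    (η : (V →ₗ[ℝ] ℝ) → ℝ)
    (hη : ∀ l : V →ₗ[ℝ] ℝ, η l =
      (∑ i ∈ Finset.univ.filter (fun i => 0 < l (-(β i))), l (-(β i))) -
      (∑ j ∈ Finset.univ.filter (fun j => 0 < l (-(α j))), l (-(α j)))) :
    (∀ l : V →ₗ[ℝ] ℝ, η (-l) = η l) ∧
    (∀ (l : V →ₗ[ℝ] ℝ) (w : W),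
      η (l.comp ((φ w).symm : V ≃ₗ[ℝ] V).toLinearMap) = η l) := by
  -- total sums of β and α vanish
  have hβ0 : ∑ i, β i = 0 := stmt9_sum_zero β hqs
  have hα0 : ∑ j, α j = 0 := by
    obtain ⟨τ, hτ⟩ := hαneg
    have h1 : ∑ j, α j = ∑ j, α (τ j) := (Equiv.sum_comp τ α).symm
    have h2 : ∑ j, α (τ j) = -∑ j, α j := by
      simp_rw [hτ]; exact Finset.sum_neg_distrib α
    have h3 : (2 : ℝ) • (∑ j, α j) = 0 := by
      rw [two_smul]
      nth_rewrite 2 [h1]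
      rw [h2, add_neg_cancel]
    have := smul_eq_zero.mp h3
    rcases this with h | h
    · norm_num at h
    · exact h
  constructor
  · intro l
    rw [hη, hη]
    set f : Fin d → ℝ := fun i => l (β i) with hf
    set g : Fin m → ℝ := fun j => l (α j) with hg
    have hfsum : ∑ i, f i = 0 := by rw [hf]; simp only; rw [← map_sum, hβ0, map_zero]
    have hgsum : ∑ j, g j = 0 := by rw [hg]; simp only; rw [← map_sum, hα0, map_zero]
    have e1 : (∑ i ∈ univ.filter (fun i => 0 < (-l) (-(β i))), (-l) (-(β i)))
        = ∑ i ∈ univ.filter (fun i => 0 < f i), f i := by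
      apply Finset.sum_congr
      · apply Finset.filter_congr; intro i _; simp [hf]
      · intro i _; simp [hf]
    have e2 : (∑ j ∈ univ.filter (fun j => 0 < (-l) (-(α j))), (-l) (-(α j)))
        = ∑ j ∈ univ.filter (fun j => 0 < g j), g j := by
      apply Finset.sum_congr
      · apply Finset.filter_congr; intro j _; simp [hg]
      · intro j _; simp [hg]
    have e3 : (∑ i ∈ univ.filter (fun i => 0 < l (-(β i))), l (-(β i)))
        = - ∑ i ∈ univ.filter (fun i => f i < 0), f i := by
      rw [← Finset.sum_neg_distrib]
      apply Finset.sum_congr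
      · apply Finset.filter_congr; intro i _; simp [hf]
      · intro i _; simp [hf]
    have e4 : (∑ j ∈ univ.filter (fun j => 0 < l (-(α j))), l (-(α j)))
        = - ∑ j ∈ univ.filter (fun j => g j < 0), g j := by
      rw [← Finset.sum_neg_distrib]
      apply Finset.sum_congr
      · apply Finset.filter_congr; intro j _; simp [hg]
      · intro j _; simp [hg]
    rw [e1, e2, e3, e4]
    have sf := stmt9_split f
    have sg := stmt9_split g
    rw [hfsum] at sf
    rw [hgsum] at sg
    linarith
  · intro l w
    rw [hη, hη]
    obtain ⟨σ, hσ⟩ := hβW w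
    obtain ⟨ρ, hρ⟩ := hαW w
    set l' : V →ₗ[ℝ] ℝ := l.comp ((φ w).symm : V ≃ₗ[ℝ] V).toLinearMap with hl'
    have hβ' : ∀ i, l' (-(β (σ i))) = l (-(β i)) := by
      intro i
      simp only [hl', LinearMap.comp_apply, LinearEquiv.coe_coe, map_neg, hσ i]
      rw [LinearEquiv.symm_apply_apply]
    have hα' : ∀ j, l' (-(α (ρ j))) = l (-(α j)) := by
      intro j
      simp only [hl', LinearMap.comp_apply, LinearEquiv.coe_coe, map_neg, hρ j]
      rw [LinearEquiv.symm_apply_apply]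
    have eβ : (∑ i ∈ univ.filter (fun i => 0 < l' (-(β i))), l' (-(β i)))
        = ∑ i ∈ univ.filter (fun i => 0 < l (-(β i))), l (-(β i)) := by
      rw [Finset.sum_filter, Finset.sum_filter]
      exact (Fintype.sum_equiv σ _ _ (fun i => by rw [hβ' i])).symm
    have eα : (∑ j ∈ univ.filter (fun j => 0 < l' (-(α j))), l' (-(α j)))
        = ∑ j ∈ univ.filter (fun j => 0 < l (-(α j))), l (-(α j)) := by
      rw [Finset.sum_filter, Finset.sum_filter]
      exact (Fintype.sum_equiv ρ _ _ (fun j => by rw [hα' j])).symm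
    rw [eβ, eα]
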